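/- arXiv:2603.13704 — 2 statements merged into one kernel-verified Lean document; each statement's English description precedes it below -/
import Mathlib

section
/- Suppose E[κ_X(X,X)] < ∞ and E[κ_Z(Z,Z)] < ∞, and that for every g ∈ G_X the function z ↦ E[g(X) | Z = z] has a version belonging to G_Z. Then for every f in the orthogonal complement of ker(Σ_ZZ) in G_Z and every g ∈ G_X, one has ⟨B_{X|Z} f, g⟩_{G_X} = ⟨f, E[g(X) | Z = ·]⟩_{G_Z}, where B_{X|Z} = Σ_XZ Σ_ZZ^†. The analogous identity holds with (Y, G_Y) in place of (X, G_X). -/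
/-!
# Statement 0

RKHSs are modelled through their canonical feature maps `k : H → G`,
`x ↦ κ(·,x)`, into separable Hilbert spaces whose closed linear span is the
whole space; the reproducing property reads `f(x) = ⟪k x, f⟫` and
`κ(x,x') = ⟪k x, k x'⟫`.  The Moore–Penrose inverse of the covariance
operator is encoded through the Penrose axioms.

Statement: under the moment assumptions `E[κ_X(X,X)] < ∞`, `E[κ_Y(Y,Y)] < ∞`,
`E[κ_Z(Z,Z)] < ∞` and the assumption that `z ↦ E[g(X)|Z=z]` (resp. for `Y`)
has a version in `G_Z` for every `g`, for every `f ∈ (ker Σ_ZZ)ᗮ` and every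
`g`, `⟪B_{X|Z} f, g⟫ = ⟪f, E[g(X)|Z=·]⟫` with `B_{X|Z} = Σ_XZ Σ_ZZ^†`;
and analogously for `Y`.
-/

open MeasureTheory ProbabilityTheory Filter
open scoped RealInnerProductSpace

noncomputable section

/-- The rank-one operator `u ⊗ v : H₂ → H₁`, `w ↦ ⟪v, w⟫ u`. -/
def rankOne {H1 H2 : Type*} [NormedAddCommGroup H1] [InnerProductSpace ℝ H1]
    [NormedAddCommGroup H2] [InnerProductSpace ℝ H2] (u : H1) (v : H2) : H2 →L[ℝ] H1 :=
  (innerSL ℝ v).smulRight u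

variable {Ω : Type*} [MeasurableSpace Ω]

/-- The mean element `μ = E[k(·,X)] ∈ G` (Bochner integral). -/
def meanElem {H G : Type*} [NormedAddCommGroup G] [InnerProductSpace ℝ G] [CompleteSpace G]
    (P : Measure Ω) (k : H → G) (X : Ω → H) : G :=
  ∫ ω, k (X ω) ∂P

/-- The centered kernel section `κ̃(·,x) = κ(·,x) − μ`. -/
def ctrKer {H G : Type*} [NormedAddCommGroup G] [InnerProductSpace ℝ G] [CompleteSpace G]
    (P : Measure Ω) (k : H → G) (X : Ω → H) (x : H) : G :=
  k x - meanElem P k X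

/-- The (cross-)covariance operator `Σ_{XZ} = E[κ̃_X(·,X) ⊗ κ̃_Z(·,Z)] : G₂ → G₁`. -/
def crossCov {H1 G1 H2 G2 : Type*}
    [NormedAddCommGroup G1] [InnerProductSpace ℝ G1] [CompleteSpace G1]
    [NormedAddCommGroup G2] [InnerProductSpace ℝ G2] [CompleteSpace G2]
    (P : Measure Ω) (k1 : H1 → G1) (X : Ω → H1) (k2 : H2 → G2) (Z : Ω → H2) :
    G2 →L[ℝ] G1 :=
  ∫ ω, rankOne (ctrKer P k1 X (X ω)) (ctrKer P k2 Z (Z ω)) ∂P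

/-- The Penrose axioms characterizing the Moore–Penrose inverse `dag` of a
self-adjoint operator `C` (the two compositions are symmetric). -/
def IsMoorePenroseInv {G : Type*} [NormedAddCommGroup G] [InnerProductSpace ℝ G]
    (C : G →L[ℝ] G) (dag : G →ₗ[ℝ] G) : Prop :=
  (∀ f, C (dag (C f)) = C f) ∧ (∀ f, dag (C (dag f)) = dag f) ∧
    (∀ f g, ⟪C (dag f), g⟫ = ⟪f, C (dag g)⟫) ∧
    (∀ f g, ⟪dag (C f), g⟫ = ⟪f, dag (C g)⟫)


set_option linter.unusedSectionVars false

lemma rankOne_norm {H1 H2 : Type*} [NormedAddCommGroup H1] [InnerProductSpace ℝ H1]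
    [NormedAddCommGroup H2] [InnerProductSpace ℝ H2] (u : H1) (v : H2) :
    ‖rankOne u v‖ = ‖v‖ * ‖u‖ := by
  rw [rankOne, ContinuousLinearMap.norm_smulRight_apply, innerSL_apply_norm]

lemma rankOne_continuous {H1 H2 : Type*} [NormedAddCommGroup H1] [InnerProductSpace ℝ H1]
    [NormedAddCommGroup H2] [InnerProductSpace ℝ H2] :
    Continuous (fun p : H1 × H2 => rankOne p.1 p.2) := by
  have : (fun p : H1 × H2 => rankOne p.1 p.2)
      = fun p : H1 × H2 => ContinuousLinearMap.smulRightL ℝ H2 H1 (innerSL ℝ p.2) p.1 := rfl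
  rw [this]
  exact (ContinuousLinearMap.smulRightL ℝ H2 H1).continuous₂.comp
    (((innerSL ℝ).continuous.comp continuous_snd).prodMk continuous_fst)

lemma rankOne_apply {H1 H2 : Type*} [NormedAddCommGroup H1] [InnerProductSpace ℝ H1]
    [NormedAddCommGroup H2] [InnerProductSpace ℝ H2] (u : H1) (v : H2) (w : H2) :
    rankOne u v w = ⟪v, w⟫ • u := rfl

section Single

variable {H G : Type*}
    [NormedAddCommGroup H] [InnerProductSpace ℝ H]
    [MeasurableSpace H] [BorelSpace H]
    [NormedAddCommGroup G] [InnerProductSpace ℝ G] [CompleteSpace G]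
    [SecondCountableTopology G] [MeasurableSpace G] [BorelSpace G]

lemma integrable_feat (P : Measure Ω) [IsProbabilityMeasure P]
    (k : H → G) (X : Ω → H) (hX : Measurable X) (hk : Measurable k)
    (hm : Integrable (fun ω => ⟪k (X ω), k (X ω)⟫) P) :
    Integrable (fun ω => k (X ω)) P := by
  refine Integrable.mono' ((integrable_const (1:ℝ)).add hm)
    ((hk.comp hX).aestronglyMeasurable) (Filter.Eventually.of_forall fun ω => ?_)
  have : ‖k (X ω)‖ ≤ 1 + ‖k (X ω)‖ * ‖k (X ω)‖ := by nlinarith [sq_nonneg (‖k (X ω)‖ - 1)]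
  simpa [real_inner_self_eq_norm_mul_norm, ← pow_two] using this

lemma integrable_norm_feat (P : Measure Ω) [IsProbabilityMeasure P]
    (k : H → G) (X : Ω → H) (hX : Measurable X) (hk : Measurable k)
    (hm : Integrable (fun ω => ⟪k (X ω), k (X ω)⟫) P) :
    Integrable (fun ω => ‖k (X ω)‖) P :=
  (integrable_feat P k X hX hk hm).norm

/-- The centered feature map integrates to zero. -/
lemma integral_ctrKer (P : Measure Ω) [IsProbabilityMeasure P]
    (k : H → G) (X : Ω → H) (hX : Measurable X) (hk : Measurable k)
    (hm : Integrable (fun ω => ⟪k (X ω), k (X ω)⟫) P) :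
    ∫ ω, ctrKer P k X (X ω) ∂P = 0 := by
  rw [show (fun ω => ctrKer P k X (X ω)) = fun ω => k (X ω) - meanElem P k X from rfl]
  rw [integral_sub (integrable_feat P k X hX hk hm) (integrable_const _)]
  simp [meanElem]

end Single

section Pair

variable {H1 G1 H2 G2 : Type*}
    [NormedAddCommGroup H1] [InnerProductSpace ℝ H1] [MeasurableSpace H1] [BorelSpace H1]
    [NormedAddCommGroup G1] [InnerProductSpace ℝ G1] [CompleteSpace G1]
    [SecondCountableTopology G1] [MeasurableSpace G1] [BorelSpace G1]
    [NormedAddCommGroup H2] [InnerProductSpace ℝ H2] [MeasurableSpace H2] [BorelSpace H2]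
    [NormedAddCommGroup G2] [InnerProductSpace ℝ G2] [CompleteSpace G2]
    [SecondCountableTopology G2] [MeasurableSpace G2] [BorelSpace G2]

/-- Integrability of the product of (shifted) feature norms. -/
lemma integrable_shifted_prod (P : Measure Ω) [IsProbabilityMeasure P]
    (k1 : H1 → G1) (X : Ω → H1) (k2 : H2 → G2) (Z : Ω → H2)
    (hX : Measurable X) (hZ : Measurable Z) (hk1 : Measurable k1) (hk2 : Measurable k2)
    (hm1 : Integrable (fun ω => ⟪k1 (X ω), k1 (X ω)⟫) P)
    (hm2 : Integrable (fun ω => ⟪k2 (Z ω), k2 (Z ω)⟫) P)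
    (c1 c2 : ℝ) (hc1 : 0 ≤ c1) (hc2 : 0 ≤ c2) :
    Integrable (fun ω => (‖k1 (X ω)‖ + c1) * (‖k2 (Z ω)‖ + c2)) P := by
  have hmeas : AEStronglyMeasurable (fun ω => (‖k1 (X ω)‖ + c1) * (‖k2 (Z ω)‖ + c2)) P := by
    exact (((hk1.comp hX).norm.add measurable_const).mul
      ((hk2.comp hZ).norm.add measurable_const)).aestronglyMeasurable
  refine Integrable.mono' ((hm1.add hm2).add (integrable_const (c1 ^ 2 + c2 ^ 2))) hmeas
    (Filter.Eventually.of_forall fun ω => ?_)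
  have h1 : (0:ℝ) ≤ ‖k1 (X ω)‖ := norm_nonneg _
  have h2 : (0:ℝ) ≤ ‖k2 (Z ω)‖ := norm_nonneg _
  have e1 : ⟪k1 (X ω), k1 (X ω)⟫ = ‖k1 (X ω)‖ * ‖k1 (X ω)‖ := real_inner_self_eq_norm_mul_norm _
  have e2 : ⟪k2 (Z ω), k2 (Z ω)⟫ = ‖k2 (Z ω)‖ * ‖k2 (Z ω)‖ := real_inner_self_eq_norm_mul_norm _
  rw [Real.norm_eq_abs, abs_of_nonneg (by positivity)]
  simp only [Pi.add_apply, e1, e2]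
  nlinarith [sq_nonneg (‖k1 (X ω)‖ - ‖k2 (Z ω)‖), sq_nonneg (‖k1 (X ω)‖ - c2),
    sq_nonneg (‖k2 (Z ω)‖ - c1), sq_nonneg (c1 - c2)]

/-- `⟪Σ_{XZ} e, g⟫ = E[⟪κ̃₁(X), g⟫ ⟪κ̃₂(Z), e⟫]`. -/
lemma crossCov_inner (P : Measure Ω) [IsProbabilityMeasure P]
    (k1 : H1 → G1) (X : Ω → H1) (k2 : H2 → G2) (Z : Ω → H2)
    (hX : Measurable X) (hZ : Measurable Z) (hk1 : Measurable k1) (hk2 : Measurable k2)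
    (hm1 : Integrable (fun ω => ⟪k1 (X ω), k1 (X ω)⟫) P)
    (hm2 : Integrable (fun ω => ⟪k2 (Z ω), k2 (Z ω)⟫) P)
    (e : G2) (g : G1) :
    ⟪crossCov P k1 X k2 Z e, g⟫
      = ∫ ω, ⟪ctrKer P k1 X (X ω), g⟫ * ⟪ctrKer P k2 Z (Z ω), e⟫ ∂P := by
  set μ1 := meanElem P k1 X
  set μ2 := meanElem P k2 Z
  have hbound : ∀ ω, ‖ctrKer P k2 Z (Z ω)‖ * ‖ctrKer P k1 X (X ω)‖
      ≤ (‖k1 (X ω)‖ + ‖μ1‖) * (‖k2 (Z ω)‖ + ‖μ2‖) := by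
    intro ω
    have a1 : ‖ctrKer P k1 X (X ω)‖ ≤ ‖k1 (X ω)‖ + ‖μ1‖ := norm_sub_le _ _
    have a2 : ‖ctrKer P k2 Z (Z ω)‖ ≤ ‖k2 (Z ω)‖ + ‖μ2‖ := norm_sub_le _ _
    have := mul_le_mul a2 a1 (norm_nonneg _) (by positivity)
    linarith [this]
  have hint_prod := integrable_shifted_prod P k1 X k2 Z hX hZ hk1 hk2 hm1 hm2
    ‖μ1‖ ‖μ2‖ (norm_nonneg _) (norm_nonneg _)
  have hmeas_ctr1 : Measurable (fun ω => ctrKer P k1 X (X ω)) :=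
    (hk1.comp hX).sub measurable_const
  have hmeas_ctr2 : Measurable (fun ω => ctrKer P k2 Z (Z ω)) :=
    (hk2.comp hZ).sub measurable_const
  -- integrability of the rank-one-valued map
  have hint_op : Integrable
      (fun ω => rankOne (ctrKer P k1 X (X ω)) (ctrKer P k2 Z (Z ω))) P := by
    refine Integrable.mono' hint_prod ?_ (Filter.Eventually.of_forall fun ω => ?_)
    · exact (rankOne_continuous.comp_aestronglyMeasurable
        ((hmeas_ctr1.prodMk hmeas_ctr2).aestronglyMeasurable))
    · rw [rankOne_norm]; exact hbound ω
  -- integrability of the vector-valued integrand applied at e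
  have hint_vec : Integrable (fun ω => ⟪ctrKer P k2 Z (Z ω), e⟫ • ctrKer P k1 X (X ω)) P := by
    refine Integrable.mono' (hint_prod.const_mul ‖e‖) ?_
      (Filter.Eventually.of_forall fun ω => ?_)
    · exact ((hmeas_ctr2.inner measurable_const).smul hmeas_ctr1).aestronglyMeasurable
    · rw [norm_smul]
      calc ‖⟪ctrKer P k2 Z (Z ω), e⟫‖ * ‖ctrKer P k1 X (X ω)‖
          ≤ (‖ctrKer P k2 Z (Z ω)‖ * ‖e‖) * ‖ctrKer P k1 X (X ω)‖ := by
            refine mul_le_mul_of_nonneg_right ?_ (norm_nonneg _)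
            exact (norm_inner_le_norm _ _)
        _ ≤ ‖e‖ * ((‖k1 (X ω)‖ + ‖μ1‖) * (‖k2 (Z ω)‖ + ‖μ2‖)) := by
            have := hbound ω
            nlinarith [norm_nonneg e, norm_nonneg (ctrKer P k1 X (X ω)),
              norm_nonneg (ctrKer P k2 Z (Z ω))]
  have happ : crossCov P k1 X k2 Z e
      = ∫ ω, ⟪ctrKer P k2 Z (Z ω), e⟫ • ctrKer P k1 X (X ω) ∂P := by
    rw [crossCov, ContinuousLinearMap.integral_apply hint_op e]
    simp only [rankOne_apply]
  rw [happ, real_inner_comm, ← integral_inner hint_vec]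
  refine integral_congr_ae (Filter.Eventually.of_forall fun ω => ?_)
  simp only [real_inner_smul_right]
  rw [real_inner_comm g (ctrKer P k1 X (X ω)), real_inner_comm e (ctrKer P k2 Z (Z ω))]
  ring

end Pair


section Key

variable {H1 G1 H2 G2 : Type*}
    [NormedAddCommGroup H1] [InnerProductSpace ℝ H1] [MeasurableSpace H1] [BorelSpace H1]
    [NormedAddCommGroup G1] [InnerProductSpace ℝ G1] [CompleteSpace G1]
    [SecondCountableTopology G1] [MeasurableSpace G1] [BorelSpace G1]
    [NormedAddCommGroup H2] [InnerProductSpace ℝ H2] [MeasurableSpace H2] [BorelSpace H2]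
    [NormedAddCommGroup G2] [InnerProductSpace ℝ G2] [CompleteSpace G2]
    [SecondCountableTopology G2] [MeasurableSpace G2] [BorelSpace G2]

/-- Key identity: `⟪Σ_{XZ} e, g⟫ = ⟪Σ_{ZZ} e, h⟫` whenever `h` is a version of the
conditional expectation of `g(X)` given `Z`. -/
lemma crossCov_condexp (P : Measure Ω) [IsProbabilityMeasure P]
    (k1 : H1 → G1) (X : Ω → H1) (k2 : H2 → G2) (Z : Ω → H2)
    (hX : Measurable X) (hZ : Measurable Z) (hk1 : Measurable k1) (hk2 : Measurable k2)
    (hm1 : Integrable (fun ω => ⟪k1 (X ω), k1 (X ω)⟫) P)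
    (hm2 : Integrable (fun ω => ⟪k2 (Z ω), k2 (Z ω)⟫) P)
    (g : G1) (h : G2)
    (hh : (fun ω => ⟪k2 (Z ω), h⟫) =ᵐ[P]
        P[(fun ω => ⟪k1 (X ω), g⟫)|MeasurableSpace.comap Z inferInstance])
    (e : G2) :
    ⟪crossCov P k1 X k2 Z e, g⟫ = ⟪crossCov P k2 Z k2 Z e, h⟫ := by
  rw [crossCov_inner P k1 X k2 Z hX hZ hk1 hk2 hm1 hm2 e g,
    crossCov_inner P k2 Z k2 Z hZ hZ hk2 hk2 hm2 hm2 e h]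
  have hm : MeasurableSpace.comap Z inferInstance ≤ ‹MeasurableSpace Ω› :=
    measurable_iff_comap_le.mp hZ
  set μ1 := meanElem P k1 X with hμ1
  set μ2 := meanElem P k2 Z with hμ2
  set A : Ω → ℝ := fun ω => ⟪k1 (X ω), g⟫ with hA
  set B : Ω → ℝ := fun ω => ⟪ctrKer P k2 Z (Z ω), e⟫ with hB
  -- basic integrability facts
  have hfeat1 : Integrable (fun ω => k1 (X ω)) P := integrable_feat P k1 X hX hk1 hm1
  have hfeat2 : Integrable (fun ω => k2 (Z ω)) P := integrable_feat P k2 Z hZ hk2 hm2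
  have hctr2_int : Integrable (fun ω => ctrKer P k2 Z (Z ω)) P :=
    hfeat2.sub (integrable_const μ2)
  have hA_int : Integrable A P := by
    refine Integrable.mono' (hfeat1.norm.const_mul ‖g‖)
      (((hk1.comp hX).inner measurable_const).aestronglyMeasurable)
      (Filter.Eventually.of_forall fun ω => ?_)
    calc ‖A ω‖ ≤ ‖k1 (X ω)‖ * ‖g‖ := norm_inner_le_norm _ _
      _ = ‖g‖ * ‖k1 (X ω)‖ := mul_comm _ _
  have hB_meas : Measurable B := (((hk2.comp hZ).sub measurable_const).inner measurable_const)
  have hB_int : Integrable B P := by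
    refine Integrable.mono' (hctr2_int.norm.const_mul ‖e‖)
      hB_meas.aestronglyMeasurable (Filter.Eventually.of_forall fun ω => ?_)
    calc ‖B ω‖ ≤ ‖ctrKer P k2 Z (Z ω)‖ * ‖e‖ := norm_inner_le_norm _ _
      _ = ‖e‖ * ‖ctrKer P k2 Z (Z ω)‖ := mul_comm _ _
  have hctr2_bd : ∀ ω, ‖ctrKer P k2 Z (Z ω)‖ ≤ ‖k2 (Z ω)‖ + ‖μ2‖ := fun ω => norm_sub_le _ _
  have hBA_int : Integrable (B * A) P := by
    refine Integrable.mono'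
      ((integrable_shifted_prod P k1 X k2 Z hX hZ hk1 hk2 hm1 hm2 0 ‖μ2‖ le_rfl
        (norm_nonneg _)).const_mul (‖e‖ * ‖g‖))
      ((hB_meas.mul ((hk1.comp hX).inner measurable_const)).aestronglyMeasurable)
      (Filter.Eventually.of_forall fun ω => ?_)
    have b1 : ‖B ω‖ ≤ ‖e‖ * (‖k2 (Z ω)‖ + ‖μ2‖) := by
      calc ‖B ω‖ ≤ ‖ctrKer P k2 Z (Z ω)‖ * ‖e‖ := norm_inner_le_norm _ _
        _ ≤ ‖e‖ * (‖k2 (Z ω)‖ + ‖μ2‖) := by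
            have := hctr2_bd ω; nlinarith [norm_nonneg e]
    have b2 : ‖A ω‖ ≤ ‖g‖ * ‖k1 (X ω)‖ := by
      calc ‖A ω‖ ≤ ‖k1 (X ω)‖ * ‖g‖ := norm_inner_le_norm _ _
        _ = ‖g‖ * ‖k1 (X ω)‖ := mul_comm _ _
    have : ‖(B * A) ω‖ = ‖B ω‖ * ‖A ω‖ := by simp [abs_mul]
    rw [this]
    have hnn : (0:ℝ) ≤ ‖B ω‖ := norm_nonneg _
    have hnn2 : (0:ℝ) ≤ ‖A ω‖ := norm_nonneg _
    calc ‖B ω‖ * ‖A ω‖ ≤ (‖e‖ * (‖k2 (Z ω)‖ + ‖μ2‖)) * (‖g‖ * ‖k1 (X ω)‖) := by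
          exact mul_le_mul b1 b2 hnn2 (by positivity)
      _ = ‖e‖ * ‖g‖ * ((‖k1 (X ω)‖ + 0) * (‖k2 (Z ω)‖ + ‖μ2‖)) := by ring
  have hB_sm : StronglyMeasurable[MeasurableSpace.comap Z inferInstance] B := by
    have : Measurable[MeasurableSpace.comap Z inferInstance] B := by
      intro t ht
      exact ⟨(fun v : H2 => (⟪k2 v - μ2, e⟫ : ℝ)) ⁻¹' t,
        ((hk2.sub measurable_const).inner measurable_const) ht, rfl⟩
    exact this.stronglyMeasurable
  -- the centered Z-feature has zero integral
  have hintB0 : ∫ ω, B ω ∂P = 0 := by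
    have : ∀ ω, B ω = ⟪e, ctrKer P k2 Z (Z ω)⟫ := fun ω => real_inner_comm _ _
    simp_rw [this]
    rw [integral_inner hctr2_int, integral_ctrKer P k2 Z hZ hk2 hm2, inner_zero_right]
  -- main computation
  have step1 : ∫ ω, ⟪ctrKer P k1 X (X ω), g⟫ * B ω ∂P = ∫ ω, B ω * A ω ∂P := by
    have hfun : ∀ ω, ⟪ctrKer P k1 X (X ω), g⟫ * B ω = B ω * A ω - ⟪μ1, g⟫ * B ω := by
      intro ω
      have : ⟪ctrKer P k1 X (X ω), g⟫ = A ω - ⟪μ1, g⟫ := by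
        rw [hA]; exact inner_sub_left _ _ _
      rw [this]; ring
    simp_rw [hfun]
    rw [integral_sub (by exact hBA_int) (hB_int.const_mul _),
      integral_const_mul, hintB0, mul_zero, sub_zero]
  have step2 : ∫ ω, B ω * A ω ∂P = ∫ ω, B ω * ⟪k2 (Z ω), h⟫ ∂P := by
    have h1 : ∫ ω, B ω * A ω ∂P
        = ∫ ω, (P[B * A|MeasurableSpace.comap Z inferInstance]) ω ∂P := (integral_condExp hm).symm
    have h2 : P[B * A|MeasurableSpace.comap Z inferInstance]
        =ᵐ[P] B * P[A|MeasurableSpace.comap Z inferInstance] :=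
      condExp_mul_of_stronglyMeasurable_left hB_sm hBA_int hA_int
    have h3 : (B * P[A|MeasurableSpace.comap Z inferInstance] : Ω → ℝ)
        =ᵐ[P] fun ω => B ω * ⟪k2 (Z ω), h⟫ := by
      filter_upwards [hh] with ω hω
      simp only [Pi.mul_apply, ← hω]
    rw [h1, integral_congr_ae (h2.trans h3)]
  have step3 : ∫ ω, B ω * ⟪k2 (Z ω), h⟫ ∂P = ∫ ω, ⟪ctrKer P k2 Z (Z ω), h⟫ * B ω ∂P := by
    have hfun : ∀ ω, B ω * ⟪k2 (Z ω), h⟫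
        = ⟪ctrKer P k2 Z (Z ω), h⟫ * B ω + ⟪μ2, h⟫ * B ω := by
      intro ω
      have : ⟪ctrKer P k2 Z (Z ω), h⟫ = ⟪k2 (Z ω), h⟫ - ⟪μ2, h⟫ := inner_sub_left _ _ _
      rw [this]; ring
    simp_rw [hfun]
    have hctr2h_int : Integrable (fun ω => ⟪ctrKer P k2 Z (Z ω), h⟫ * B ω) P := by
      refine Integrable.mono'
        ((integrable_shifted_prod P k2 Z k2 Z hZ hZ hk2 hk2 hm2 hm2 ‖μ2‖ ‖μ2‖
          (norm_nonneg _) (norm_nonneg _)).const_mul (‖h‖ * ‖e‖))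
        (((((hk2.comp hZ).sub measurable_const).inner measurable_const).mul
          hB_meas).aestronglyMeasurable)
        (Filter.Eventually.of_forall fun ω => ?_)
      have b1 : ‖(⟪ctrKer P k2 Z (Z ω), h⟫ : ℝ)‖ ≤ (‖k2 (Z ω)‖ + ‖μ2‖) * ‖h‖ := by
        calc ‖(⟪ctrKer P k2 Z (Z ω), h⟫ : ℝ)‖ ≤ ‖ctrKer P k2 Z (Z ω)‖ * ‖h‖ :=
            norm_inner_le_norm _ _
          _ ≤ (‖k2 (Z ω)‖ + ‖μ2‖) * ‖h‖ := by
              have := hctr2_bd ω; nlinarith [norm_nonneg h]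
      have b2 : ‖B ω‖ ≤ (‖k2 (Z ω)‖ + ‖μ2‖) * ‖e‖ := by
        calc ‖B ω‖ ≤ ‖ctrKer P k2 Z (Z ω)‖ * ‖e‖ := norm_inner_le_norm _ _
          _ ≤ (‖k2 (Z ω)‖ + ‖μ2‖) * ‖e‖ := by
              have := hctr2_bd ω; nlinarith [norm_nonneg e]
      have : ‖⟪ctrKer P k2 Z (Z ω), h⟫ * B ω‖ = ‖(⟪ctrKer P k2 Z (Z ω), h⟫ : ℝ)‖ * ‖B ω‖ := by
        simp [abs_mul]
      rw [this]
      calc ‖(⟪ctrKer P k2 Z (Z ω), h⟫ : ℝ)‖ * ‖B ω‖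
          ≤ ((‖k2 (Z ω)‖ + ‖μ2‖) * ‖h‖) * ((‖k2 (Z ω)‖ + ‖μ2‖) * ‖e‖) :=
            mul_le_mul b1 b2 (norm_nonneg _) (by positivity)
        _ = ‖h‖ * ‖e‖ * ((‖k2 (Z ω)‖ + ‖μ2‖) * (‖k2 (Z ω)‖ + ‖μ2‖)) := by ring
    rw [integral_add hctr2h_int (hB_int.const_mul _), integral_const_mul, hintB0,
      mul_zero, add_zero]
  rw [step1, step2, step3]

end Key

section MP

variable {G : Type*} [NormedAddCommGroup G] [InnerProductSpace ℝ G]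

/-- For a self-adjoint operator `C` with Moore–Penrose inverse `dag`, and
`f ∈ (ker C)ᗮ`, one has `C (dag f) = f`. -/
lemma mp_apply_of_mem_orthogonal (C : G →L[ℝ] G)
    (sa : ∀ u v : G, ⟪C u, v⟫ = ⟪u, C v⟫) (dag : G →ₗ[ℝ] G)
    (hdag : IsMoorePenroseInv C dag) (f : G) (hf : f ∈ (LinearMap.ker (C : G →ₗ[ℝ] G))ᗮ) :
    C (dag f) = f := by
  obtain ⟨ax1, ax2, ax3, ax4⟩ := hdag
  -- C (dag f) ∈ (ker C)ᗮ
  have h1 : C (dag f) ∈ (LinearMap.ker (C : G →ₗ[ℝ] G))ᗮ := by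
    rw [Submodule.mem_orthogonal]
    intro u hu
    have hu0 : C u = 0 := LinearMap.mem_ker.mp hu
    rw [real_inner_comm, sa, hu0, inner_zero_right]
  have hq : C (dag f) - f ∈ (LinearMap.ker (C : G →ₗ[ℝ] G))ᗮ := Submodule.sub_mem _ h1 hf
  -- C (dag f) - f ∈ ker C
  have hker : C (dag f) - f ∈ LinearMap.ker (C : G →ₗ[ℝ] G) := by
    rw [LinearMap.mem_ker]
    have key : ∀ v : G, ⟪C (C (dag f) - f), v⟫ = 0 := by
      intro v
      rw [sa, inner_sub_left]
      have e1 : ⟪C (dag f), C v⟫ = ⟪f, C v⟫ := by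
        rw [ax3 f (C v), ax1 v]
      rw [e1, sub_self]
    have := key (C (C (dag f) - f))
    exact inner_self_eq_zero.mp this
  have : C (dag f) - f = 0 := by
    have := (Submodule.mem_orthogonal _ _).mp hq _ hker
    rw [real_inner_comm] at this
    exact inner_self_eq_zero.mp this
  exact sub_eq_zero.mp this

end MP

section SelfAdj

variable {H2 G2 : Type*}
    [NormedAddCommGroup H2] [InnerProductSpace ℝ H2] [MeasurableSpace H2] [BorelSpace H2]
    [NormedAddCommGroup G2] [InnerProductSpace ℝ G2] [CompleteSpace G2]
    [SecondCountableTopology G2] [MeasurableSpace G2] [BorelSpace G2]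

lemma crossCov_self_symm (P : Measure Ω) [IsProbabilityMeasure P]
    (k2 : H2 → G2) (Z : Ω → H2) (hZ : Measurable Z) (hk2 : Measurable k2)
    (hm2 : Integrable (fun ω => ⟪k2 (Z ω), k2 (Z ω)⟫) P) (u v : G2) :
    ⟪crossCov P k2 Z k2 Z u, v⟫ = ⟪u, crossCov P k2 Z k2 Z v⟫ := by
  rw [real_inner_comm (crossCov P k2 Z k2 Z v) u,
    crossCov_inner P k2 Z k2 Z hZ hZ hk2 hk2 hm2 hm2 u v,
    crossCov_inner P k2 Z k2 Z hZ hZ hk2 hk2 hm2 hm2 v u]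
  exact integral_congr_ae (Filter.Eventually.of_forall fun ω => mul_comm _ _)

end SelfAdj

section Assemble

variable {H1 G1 H2 G2 : Type*}
    [NormedAddCommGroup H1] [InnerProductSpace ℝ H1] [MeasurableSpace H1] [BorelSpace H1]
    [NormedAddCommGroup G1] [InnerProductSpace ℝ G1] [CompleteSpace G1]
    [SecondCountableTopology G1] [MeasurableSpace G1] [BorelSpace G1]
    [NormedAddCommGroup H2] [InnerProductSpace ℝ H2] [MeasurableSpace H2] [BorelSpace H2]
    [NormedAddCommGroup G2] [InnerProductSpace ℝ G2] [CompleteSpace G2]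
    [SecondCountableTopology G2] [MeasurableSpace G2] [BorelSpace G2]

lemma statement0_aux (P : Measure Ω) [IsProbabilityMeasure P]
    (k1 : H1 → G1) (X : Ω → H1) (k2 : H2 → G2) (Z : Ω → H2)
    (hX : Measurable X) (hZ : Measurable Z) (hk1 : Measurable k1) (hk2 : Measurable k2)
    (hm1 : Integrable (fun ω => ⟪k1 (X ω), k1 (X ω)⟫) P)
    (hm2 : Integrable (fun ω => ⟪k2 (Z ω), k2 (Z ω)⟫) P)
    (dag : G2 →ₗ[ℝ] G2) (hdag : IsMoorePenroseInv (crossCov P k2 Z k2 Z) dag)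
    (f : G2) (hf : f ∈ (LinearMap.ker (crossCov P k2 Z k2 Z : G2 →ₗ[ℝ] G2))ᗮ)
    (g : G1) (h : G2)
    (hh : (fun ω => ⟪k2 (Z ω), h⟫) =ᵐ[P]
        P[(fun ω => ⟪k1 (X ω), g⟫)|MeasurableSpace.comap Z inferInstance]) :
    ⟪crossCov P k1 X k2 Z (dag f), g⟫ = ⟪f, h⟫ := by
  rw [crossCov_condexp P k1 X k2 Z hX hZ hk1 hk2 hm1 hm2 g h hh (dag f),
    mp_apply_of_mem_orthogonal (crossCov P k2 Z k2 Z)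
      (crossCov_self_symm P k2 Z hZ hk2 hm2) dag hdag f hf]

end Assemble

theorem statement0
    (P : Measure Ω) [IsProbabilityMeasure P]
    {HX HY HZ GX GY GZ : Type*}
    -- the sample Hilbert spaces, as measurable spaces with their Borel σ-fields
    [NormedAddCommGroup HX] [InnerProductSpace ℝ HX] [CompleteSpace HX]
    [SecondCountableTopology HX] [MeasurableSpace HX] [BorelSpace HX]
    [NormedAddCommGroup HY] [InnerProductSpace ℝ HY] [CompleteSpace HY]
    [SecondCountableTopology HY] [MeasurableSpace HY] [BorelSpace HY]
    [NormedAddCommGroup HZ] [InnerProductSpace ℝ HZ] [CompleteSpace HZ]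
    [SecondCountableTopology HZ] [MeasurableSpace HZ] [BorelSpace HZ]
    -- the RKHSs, as separable Hilbert spaces
    [NormedAddCommGroup GX] [InnerProductSpace ℝ GX] [CompleteSpace GX]
    [SecondCountableTopology GX] [MeasurableSpace GX] [BorelSpace GX]
    [NormedAddCommGroup GY] [InnerProductSpace ℝ GY] [CompleteSpace GY]
    [SecondCountableTopology GY] [MeasurableSpace GY] [BorelSpace GY]
    [NormedAddCommGroup GZ] [InnerProductSpace ℝ GZ] [CompleteSpace GZ]
    [SecondCountableTopology GZ] [MeasurableSpace GZ] [BorelSpace GZ]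
    -- random elements
    (X : Ω → HX) (Y : Ω → HY) (Z : Ω → HZ)
    (hX : Measurable X) (hY : Measurable Y) (hZ : Measurable Z)
    -- feature maps x ↦ κ(·,x) of the kernels, measurable, generating the RKHSs
    (kX : HX → GX) (kY : HY → GY) (kZ : HZ → GZ)
    (hkX : Measurable kX) (hkY : Measurable kY) (hkZ : Measurable kZ)
    (hdX : (Submodule.span ℝ (Set.range kX)).topologicalClosure = ⊤)
    (hdY : (Submodule.span ℝ (Set.range kY)).topologicalClosure = ⊤)
    (hdZ : (Submodule.span ℝ (Set.range kZ)).topologicalClosure = ⊤)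
    -- moment assumptions  E[κ(X,X)] < ∞
    (hmX : Integrable (fun ω => ⟪kX (X ω), kX (X ω)⟫) P)
    (hmY : Integrable (fun ω => ⟪kY (Y ω), kY (Y ω)⟫) P)
    (hmZ : Integrable (fun ω => ⟪kZ (Z ω), kZ (Z ω)⟫) P)
    -- conditional expectation assumption: E[g(X)|Z=·] has a version in G_Z
    (hCEX : ∀ g : GX, ∃ h : GZ,
      (fun ω => ⟪kZ (Z ω), h⟫) =ᵐ[P]
        P[(fun ω => ⟪kX (X ω), g⟫)|MeasurableSpace.comap Z inferInstance])
    (hCEY : ∀ g : GY, ∃ h : GZ,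
      (fun ω => ⟪kZ (Z ω), h⟫) =ᵐ[P]
        P[(fun ω => ⟪kY (Y ω), g⟫)|MeasurableSpace.comap Z inferInstance])
    -- the Moore–Penrose inverse of Σ_ZZ
    (dag : GZ →ₗ[ℝ] GZ)
    (hdag : IsMoorePenroseInv (crossCov P kZ Z kZ Z) dag) :
    (∀ f : GZ, f ∈ (LinearMap.ker (crossCov P kZ Z kZ Z : GZ →ₗ[ℝ] GZ))ᗮ →
      ∀ g : GX, ∀ h : GZ,
        ((fun ω => ⟪kZ (Z ω), h⟫) =ᵐ[P]
          P[(fun ω => ⟪kX (X ω), g⟫)|MeasurableSpace.comap Z inferInstance]) →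
        ⟪crossCov P kX X kZ Z (dag f), g⟫ = ⟪f, h⟫) ∧
    (∀ f : GZ, f ∈ (LinearMap.ker (crossCov P kZ Z kZ Z : GZ →ₗ[ℝ] GZ))ᗮ →
      ∀ g : GY, ∀ h : GZ,
        ((fun ω => ⟪kZ (Z ω), h⟫) =ᵐ[P]
          P[(fun ω => ⟪kY (Y ω), g⟫)|MeasurableSpace.comap Z inferInstance]) →
        ⟪crossCov P kY Y kZ Z (dag f), g⟫ = ⟪f, h⟫) := by
  constructor
  · intro f hf g h hh
    exact statement0_aux P kX X kZ Z hX hZ hkX hkZ hmX hmZ dag hdag f hf g h hh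
  · intro f hf g h hh
    exact statement0_aux P kY Y kZ Z hY hZ hkY hkZ hmY hmZ dag hdag f hf g h hh
end
end

section
/- Suppose E[κ_X(X,X)] < ∞ and E[κ_Z(Z,Z)] < ∞, and that for every g ∈ G_X the function z ↦ E[g(X) | Z = z] has a version belonging to G_Z. Then, for P_Z-almost every z, the conditional expectation of the G_X-valued random element κ̃_X(·,X) given Z = z satisfies E[κ̃_X(·,X) | Z = z] = B_{X|Z} κ̃_Z(·,z), where B_{X|Z} = Σ_XZ Σ_ZZ^†. The analogous identity E[κ̃_Y(·,Y) | Z = z] = B_{Y|Z} κ̃_Z(·,z) holds with (Y, G_Y) in place of (X, G_X) under the corresponding assumptions. -/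
/-!
# Statement 2

Under the moment assumptions and the conditional-expectation assumption,
`E[κ̃_X(·,X) | Z = z] = B_{X|Z} κ̃_Z(·,z)` for `P_Z`-a.e. `z`, where
`B_{X|Z} = Σ_XZ Σ_ZZ^†`; analogously for `Y`.  The statement is expressed
through conditional expectations given the σ-field generated by `Z`:
`E[κ̃_X(·,X) | σ(Z)] = B_{X|Z} κ̃_Z(·,Z)` a.s.

RKHSs are modelled through their feature maps; the Moore–Penrose inverse of
`Σ_ZZ` is encoded through the Penrose axioms.
-/

open MeasureTheory ProbabilityTheory Filter
open scoped RealInnerProductSpace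

noncomputable section

variable {Ω : Type*} [MeasurableSpace Ω]

section Helpers

variable {Ω : Type*} [MeasurableSpace Ω]

lemma norm_rankOne_le {G1 G2 : Type*} [NormedAddCommGroup G1] [InnerProductSpace ℝ G1]
    [NormedAddCommGroup G2] [InnerProductSpace ℝ G2] (u : G1) (v : G2) :
    ‖rankOne u v‖ ≤ ‖u‖ * ‖v‖ := by
  rw [rankOne, ContinuousLinearMap.norm_smulRight_apply, innerSL_apply_norm, mul_comm]

lemma continuous_rankOne {G1 G2 : Type*} [NormedAddCommGroup G1] [InnerProductSpace ℝ G1]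
    [NormedAddCommGroup G2] [InnerProductSpace ℝ G2] :
    Continuous fun p : G1 × G2 => rankOne p.1 p.2 := by
  have h1 : Continuous fun p : G1 × G2 =>
      (ContinuousLinearMap.smulRightL ℝ G2 G1) (innerSL ℝ p.2) :=
    (ContinuousLinearMap.smulRightL ℝ G2 G1).continuous.comp
      ((innerSL ℝ).continuous.comp continuous_snd)
  exact h1.clm_apply continuous_fst

lemma integrable_mul_L2 {P : Measure Ω} {f g : Ω → ℝ} (hf : MemLp f 2 P) (hg : MemLp g 2 P) :
    Integrable (fun ω => f ω * g ω) P := by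
  have h : MemLp (f • g) 1 P := hg.smul hf
  exact memLp_one_iff_integrable.mp h

lemma inner_integral_rankOne {P : Measure Ω}
    {G1 G2 : Type*} [NormedAddCommGroup G1] [InnerProductSpace ℝ G1] [CompleteSpace G1]
    [NormedAddCommGroup G2] [InnerProductSpace ℝ G2] [CompleteSpace G2]
    {φ : Ω → G1} {ψ : Ω → G2} (hφ : MemLp φ 2 P) (hψ : MemLp ψ 2 P)
    (f : G1) (v : G2) :
    ⟪f, (∫ ω, rankOne (φ ω) (ψ ω) ∂P) v⟫ = ∫ ω, ⟪f, φ ω⟫ * ⟪ψ ω, v⟫ ∂P := by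
  have hsm : AEStronglyMeasurable (fun ω => rankOne (φ ω) (ψ ω)) P :=
    continuous_rankOne.comp_aestronglyMeasurable (hφ.1.prodMk hψ.1)
  have hbound : Integrable (fun ω => ‖φ ω‖ * ‖ψ ω‖) P :=
    integrable_mul_L2 hφ.norm hψ.norm
  have hint : Integrable (fun ω => rankOne (φ ω) (ψ ω)) P :=
    hbound.mono' hsm (Eventually.of_forall fun ω => norm_rankOne_le _ _)
  have hint2 : Integrable (fun ω => (⟪ψ ω, v⟫ : ℝ) • φ ω) P := by
    have h : MemLp ((fun ω => (⟪ψ ω, v⟫ : ℝ)) • φ) 1 P :=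
      hφ.smul (hψ.inner_const v)
    exact memLp_one_iff_integrable.mp h
  rw [ContinuousLinearMap.integral_apply hint v]
  have : (fun ω => rankOne (φ ω) (ψ ω) v) = fun ω => (⟪ψ ω, v⟫ : ℝ) • φ ω := rfl
  rw [this, ← integral_inner hint2 f]
  refine integral_congr_ae (Eventually.of_forall fun ω => ?_)
  show ⟪f, ⟪ψ ω, v⟫ • φ ω⟫ = ⟪f, φ ω⟫ * ⟪ψ ω, v⟫
  rw [real_inner_smul_right, mul_comm]

lemma crossCov_inner_s2 {P : Measure Ω}
    {H1 G1 H2 G2 : Type*}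
    [NormedAddCommGroup G1] [InnerProductSpace ℝ G1] [CompleteSpace G1]
    [NormedAddCommGroup G2] [InnerProductSpace ℝ G2] [CompleteSpace G2]
    {k1 : H1 → G1} {X : Ω → H1} {k2 : H2 → G2} {Z : Ω → H2}
    (hφ : MemLp (fun ω => ctrKer P k1 X (X ω)) 2 P)
    (hψ : MemLp (fun ω => ctrKer P k2 Z (Z ω)) 2 P)
    (f : G1) (v : G2) :
    ⟪f, crossCov P k1 X k2 Z v⟫
      = ∫ ω, ⟪f, ctrKer P k1 X (X ω)⟫ * ⟪ctrKer P k2 Z (Z ω), v⟫ ∂P := by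
  unfold crossCov
  exact inner_integral_rankOne hφ hψ f v

lemma memLp_two_kernel {P : Measure Ω} {H G : Type*} [MeasurableSpace H]
    [NormedAddCommGroup G] [InnerProductSpace ℝ G] [SecondCountableTopology G]
    [MeasurableSpace G] [BorelSpace G]
    {W : Ω → H} {k : H → G} (hW : Measurable W) (hk : Measurable k)
    (hm : Integrable (fun ω => ⟪k (W ω), k (W ω)⟫) P) :
    MemLp (fun ω => k (W ω)) 2 P := by
  have hmeas : AEStronglyMeasurable (fun ω => k (W ω)) P :=
    ((hk.comp hW).stronglyMeasurable).aestronglyMeasurable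
  rw [memLp_two_iff_integrable_sq_norm hmeas]
  exact hm.congr (Eventually.of_forall fun ω => real_inner_self_eq_norm_sq _)

lemma integral_inner_const {P : Measure Ω} {G : Type*} [NormedAddCommGroup G]
    [InnerProductSpace ℝ G] [CompleteSpace G] {f : Ω → G} (hf : Integrable f P) (c : G) :
    ∫ ω, ⟪f ω, c⟫ ∂P = ⟪∫ ω, f ω ∂P, c⟫ := by
  rw [real_inner_comm, ← integral_inner hf c]
  exact integral_congr_ae (Eventually.of_forall fun ω => real_inner_comm _ _)

end Helpers

lemma condexp_inner_ae {Ω : Type*} {m : MeasurableSpace Ω} [mΩ : MeasurableSpace Ω]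
    {P : Measure Ω} [IsProbabilityMeasure P] (hm : m ≤ mΩ)
    {G : Type*} [NormedAddCommGroup G] [InnerProductSpace ℝ G] [CompleteSpace G]
    {f : Ω → G} (hf : Integrable f P) (c : G) :
    (fun ω => ⟪c, (P[f|m]) ω⟫) =ᵐ[P] P[fun ω => ⟪c, f ω⟫|m] := by
  refine ae_eq_condExp_of_forall_setIntegral_eq (μ := P) hm (hf.const_inner c) ?_ ?_ ?_
  · intro s _ _
    exact ((integrable_condExp (μ := P)).const_inner c).integrableOn
  · intro s hs _
    rw [integral_inner ((integrable_condExp (μ := P)).integrableOn) c,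
      setIntegral_condExp hm hf hs, ← integral_inner hf.integrableOn c]
  · exact ((continuous_const.inner continuous_id).comp_stronglyMeasurable
      stronglyMeasurable_condExp).aestronglyMeasurable

lemma main_aux {Ω : Type*} [mΩ : MeasurableSpace Ω] (P : Measure Ω) [IsProbabilityMeasure P]
    {HX HZ GX GZ : Type*}
    [MeasurableSpace HX] [MeasurableSpace HZ]
    [NormedAddCommGroup GX] [InnerProductSpace ℝ GX] [CompleteSpace GX]
    [SecondCountableTopology GX] [MeasurableSpace GX] [BorelSpace GX]
    [NormedAddCommGroup GZ] [InnerProductSpace ℝ GZ] [CompleteSpace GZ]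
    [SecondCountableTopology GZ] [MeasurableSpace GZ] [BorelSpace GZ]
    (X : Ω → HX) (Z : Ω → HZ) (hX : Measurable X) (hZ : Measurable Z)
    (kX : HX → GX) (kZ : HZ → GZ) (hkX : Measurable kX) (hkZ : Measurable kZ)
    (hmX : Integrable (fun ω => ⟪kX (X ω), kX (X ω)⟫) P)
    (hmZ : Integrable (fun ω => ⟪kZ (Z ω), kZ (Z ω)⟫) P)
    (hCEX : ∀ g : GX, ∃ h : GZ,
      (fun ω => ⟪kZ (Z ω), h⟫) =ᵐ[P]
        P[(fun ω => ⟪kX (X ω), g⟫)|MeasurableSpace.comap Z inferInstance])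
    (dag : GZ →ₗ[ℝ] GZ)
    (hdag : IsMoorePenroseInv (crossCov P kZ Z kZ Z) dag) :
    P[(fun ω => ctrKer P kX X (X ω))|MeasurableSpace.comap Z inferInstance]
      =ᵐ[P] fun ω => crossCov P kX X kZ Z (dag (ctrKer P kZ Z (Z ω))) := by
  obtain ⟨hax1, _hax2, hax3, _hax4⟩ := hdag
  have hm : MeasurableSpace.comap Z inferInstance ≤ mΩ := hZ.comap_le
  have hkX2 : MemLp (fun ω => kX (X ω)) 2 P := memLp_two_kernel hX hkX hmX
  have hkZ2 : MemLp (fun ω => kZ (Z ω)) 2 P := memLp_two_kernel hZ hkZ hmZ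
  have hφ2 : MemLp (fun ω => ctrKer P kX X (X ω)) 2 P := hkX2.sub (memLp_const _)
  have hψ2 : MemLp (fun ω => ctrKer P kZ Z (Z ω)) 2 P := hkZ2.sub (memLp_const _)
  have hφ1 : Integrable (fun ω => ctrKer P kX X (X ω)) P := hφ2.integrable one_le_two
  -- self-adjointness of C = Σ_ZZ
  have hCsym : ∀ a b : GZ,
      ⟪crossCov P kZ Z kZ Z a, b⟫ = ⟪a, crossCov P kZ Z kZ Z b⟫ := by
    intro a b
    rw [real_inner_comm, crossCov_inner_s2 hψ2 hψ2 b a, crossCov_inner_s2 hψ2 hψ2 a b]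
    refine integral_congr_ae (Eventually.of_forall fun ω => ?_)
    show ⟪b, ctrKer P kZ Z (Z ω)⟫ * ⟪ctrKer P kZ Z (Z ω), a⟫
        = ⟪a, ctrKer P kZ Z (Z ω)⟫ * ⟪ctrKer P kZ Z (Z ω), b⟫
    rw [mul_comm, real_inner_comm (ctrKer P kZ Z (Z ω)) a,
      real_inner_comm b (ctrKer P kZ Z (Z ω))]
  -- pointwise key identity, for each fixed g
  have key : ∀ g : GX, ∀ᵐ ω ∂P,
      ⟪g, (P[(fun ω' => ctrKer P kX X (X ω'))|MeasurableSpace.comap Z inferInstance]) ω⟫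
        = ⟪g, crossCov P kX X kZ Z (dag (ctrKer P kZ Z (Z ω)))⟫ := by
    intro g
    obtain ⟨h, hh⟩ := hCEX g
    have hkXg1 : Integrable (fun ω => ⟪kX (X ω), g⟫) P :=
      (hkX2.integrable one_le_two).inner_const g
    -- mean identity
    have hmean : ⟪meanElem P kZ Z, h⟫ = ⟪meanElem P kX X, g⟫ := by
      have h1 : ∫ ω, ⟪kZ (Z ω), h⟫ ∂P = ∫ ω, ⟪kX (X ω), g⟫ ∂P := by
        rw [integral_congr_ae hh, integral_condExp hm]
      have h2 : ∫ ω, ⟪kZ (Z ω), h⟫ ∂P = ⟪meanElem P kZ Z, h⟫ :=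
        integral_inner_const (hkZ2.integrable one_le_two) h
      have h3 : ∫ ω, ⟪kX (X ω), g⟫ ∂P = ⟪meanElem P kX X, g⟫ :=
        integral_inner_const (hkX2.integrable one_le_two) g
      rw [← h2, h1, h3]
    -- centered conditional expectation identity
    have hcent : (fun ω => ⟪ctrKer P kZ Z (Z ω), h⟫) =ᵐ[P]
        P[(fun ω => ⟪g, ctrKer P kX X (X ω)⟫)|MeasurableSpace.comap Z inferInstance] := by
      have e1 : (fun ω => ⟪g, ctrKer P kX X (X ω)⟫)
          = (fun ω => ⟪kX (X ω), g⟫) - (fun _ => ⟪meanElem P kX X, g⟫) := by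
        funext ω
        show ⟪g, kX (X ω) - meanElem P kX X⟫ = ⟪kX (X ω), g⟫ - ⟪meanElem P kX X, g⟫
        rw [inner_sub_right, real_inner_comm g (kX (X ω)), real_inner_comm g (meanElem P kX X)]
      have e2 := condExp_sub (m := MeasurableSpace.comap Z inferInstance) (μ := P) hkXg1
        (integrable_const (⟪meanElem P kX X, g⟫ : ℝ))
      rw [e1]
      refine EventuallyEq.trans ?_ e2.symm
      have e3 := condExp_const (μ := P) hm (⟪meanElem P kX X, g⟫ : ℝ)
      filter_upwards [hh] with ω hω
      show ⟪ctrKer P kZ Z (Z ω), h⟫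
        = (P[(fun ω' => ⟪kX (X ω'), g⟫)|MeasurableSpace.comap Z inferInstance]) ω - (P[(fun _ => ⟪meanElem P kX X, g⟫ : Ω → ℝ)|MeasurableSpace.comap Z inferInstance]) ω
      rw [e3, ← hω]
      show ⟪kZ (Z ω) - meanElem P kZ Z, h⟫ = ⟪kZ (Z ω), h⟫ - ⟪meanElem P kX X, g⟫
      rw [inner_sub_left, hmean]
    -- pull-out property: Σ_ZX g = Σ_ZZ h in the weak sense
    have hpull : ∀ u : GZ,
        ∫ ω, ⟪u, ctrKer P kZ Z (Z ω)⟫ * ⟪g, ctrKer P kX X (X ω)⟫ ∂P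
          = ∫ ω, ⟪u, ctrKer P kZ Z (Z ω)⟫ * ⟪ctrKer P kZ Z (Z ω), h⟫ ∂P := by
      intro u
      have hum : StronglyMeasurable[MeasurableSpace.comap Z inferInstance] (fun ω => ⟪u, ctrKer P kZ Z (Z ω)⟫) := by
        have hG : Measurable fun z : HZ => ⟪u, kZ z - meanElem P kZ Z⟫ :=
          measurable_const.inner (hkZ.sub measurable_const)
        have hZm : Measurable[MeasurableSpace.comap Z inferInstance] Z := Measurable.of_comap_le le_rfl
        exact (hG.comp hZm).stronglyMeasurable
      have hu2 : MemLp (fun ω => ⟪u, ctrKer P kZ Z (Z ω)⟫) 2 P := hψ2.const_inner u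
      have hw2 : MemLp (fun ω => ⟪g, ctrKer P kX X (X ω)⟫) 2 P := hφ2.const_inner g
      have huw : Integrable
          ((fun ω => ⟪u, ctrKer P kZ Z (Z ω)⟫) * fun ω => ⟪g, ctrKer P kX X (X ω)⟫) P :=
        integrable_mul_L2 hu2 hw2
      have hmul := condExp_mul_of_stronglyMeasurable_left (μ := P) hum huw
        (hw2.integrable one_le_two)
      calc ∫ ω, ⟪u, ctrKer P kZ Z (Z ω)⟫ * ⟪g, ctrKer P kX X (X ω)⟫ ∂P
          = ∫ ω, (P[(fun ω' => ⟪u, ctrKer P kZ Z (Z ω')⟫)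
              * (fun ω' => ⟪g, ctrKer P kX X (X ω')⟫)|MeasurableSpace.comap Z inferInstance]) ω ∂P :=
            (integral_condExp hm).symm
        _ = ∫ ω, ⟪u, ctrKer P kZ Z (Z ω)⟫
              * (P[(fun ω' => ⟪g, ctrKer P kX X (X ω')⟫)|MeasurableSpace.comap Z inferInstance]) ω ∂P :=
            integral_congr_ae hmul
        _ = ∫ ω, ⟪u, ctrKer P kZ Z (Z ω)⟫ * ⟪ctrKer P kZ Z (Z ω), h⟫ ∂P := by
            refine integral_congr_ae ?_
            filter_upwards [hcent] with ω hω
            rw [← hω]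
    have hS : ∀ u : GZ,
        ⟪g, crossCov P kX X kZ Z u⟫ = ⟪crossCov P kZ Z kZ Z h, u⟫ := by
      intro u
      rw [crossCov_inner_s2 hφ2 hψ2 g u, real_inner_comm, crossCov_inner_s2 hψ2 hψ2 u h,
        ← hpull u]
      refine integral_congr_ae (Eventually.of_forall fun ω => ?_)
      show ⟪g, ctrKer P kX X (X ω)⟫ * ⟪ctrKer P kZ Z (Z ω), u⟫
          = ⟪u, ctrKer P kZ Z (Z ω)⟫ * ⟪g, ctrKer P kX X (X ω)⟫
      rw [mul_comm, real_inner_comm (ctrKer P kZ Z (Z ω)) u]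
    -- C C dag h = C h
    have hChh : crossCov P kZ Z kZ Z (crossCov P kZ Z kZ Z (dag h))
        = crossCov P kZ Z kZ Z h := by
      refine ext_inner_left ℝ fun w => ?_
      calc ⟪w, crossCov P kZ Z kZ Z (crossCov P kZ Z kZ Z (dag h))⟫
          = ⟪crossCov P kZ Z kZ Z w, crossCov P kZ Z kZ Z (dag h)⟫ := (hCsym w _).symm
        _ = ⟪crossCov P kZ Z kZ Z (dag h), crossCov P kZ Z kZ Z w⟫ := real_inner_comm _ _
        _ = ⟪h, crossCov P kZ Z kZ Z (dag (crossCov P kZ Z kZ Z w))⟫ := hax3 h _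
        _ = ⟪h, crossCov P kZ Z kZ Z w⟫ := by rw [hax1 w]
        _ = ⟪w, crossCov P kZ Z kZ Z h⟫ := by
            rw [real_inner_comm, hCsym]
    -- the defect vector pairs to zero with ψ a.s.
    have hvzero : ∀ᵐ ω ∂P,
        ⟪h - crossCov P kZ Z kZ Z (dag h), ctrKer P kZ Z (Z ω)⟫ = 0 := by
      set v : GZ := h - crossCov P kZ Z kZ Z (dag h) with hv_def
      have hCv : crossCov P kZ Z kZ Z v = 0 := by
        rw [hv_def, map_sub, hChh, sub_self]
      have hsq : ∫ ω, (⟪v, ctrKer P kZ Z (Z ω)⟫ : ℝ) ^ 2 ∂P = 0 := by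
        have h0 := crossCov_inner_s2 hψ2 hψ2 v v
        rw [hCv, inner_zero_right] at h0
        have h1 : ∫ ω, (⟪v, ctrKer P kZ Z (Z ω)⟫ : ℝ) ^ 2 ∂P
            = ∫ ω, ⟪v, ctrKer P kZ Z (Z ω)⟫ * ⟪ctrKer P kZ Z (Z ω), v⟫ ∂P := by
          refine integral_congr_ae (Eventually.of_forall fun ω => ?_)
          show (⟪v, ctrKer P kZ Z (Z ω)⟫ : ℝ) ^ 2
              = ⟪v, ctrKer P kZ Z (Z ω)⟫ * ⟪ctrKer P kZ Z (Z ω), v⟫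
          rw [real_inner_comm (ctrKer P kZ Z (Z ω)) v, sq]
        rw [h1]
        exact h0.symm
      have hint : Integrable (fun ω => (⟪v, ctrKer P kZ Z (Z ω)⟫ : ℝ) ^ 2) P :=
        (hψ2.const_inner v).integrable_sq
      have hz := (integral_eq_zero_iff_of_nonneg
        (fun ω => sq_nonneg _) hint).mp hsq
      filter_upwards [hz] with ω hω
      exact pow_eq_zero_iff two_ne_zero |>.mp hω
    have hLHS := condexp_inner_ae hm hφ1 g
    filter_upwards [hLHS, hcent, hvzero] with ω e1 e2 e3
    have rhs : ⟪g, crossCov P kX X kZ Z (dag (ctrKer P kZ Z (Z ω)))⟫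
        = ⟪crossCov P kZ Z kZ Z (dag h), ctrKer P kZ Z (Z ω)⟫ := by
      rw [hS (dag (ctrKer P kZ Z (Z ω))), hCsym h (dag (ctrKer P kZ Z (Z ω)))]
      exact (hax3 h (ctrKer P kZ Z (Z ω))).symm
    have lhs : ⟪g, (P[(fun ω' => ctrKer P kX X (X ω'))|MeasurableSpace.comap Z inferInstance]) ω⟫
        = ⟪h, ctrKer P kZ Z (Z ω)⟫ := by
      rw [e1, ← e2, real_inner_comm]
    rw [lhs, rhs]
    have e3' : ⟪h, ctrKer P kZ Z (Z ω)⟫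
        - ⟪crossCov P kZ Z kZ Z (dag h), ctrKer P kZ Z (Z ω)⟫ = 0 := by
      rw [← inner_sub_left]; exact e3
    linarith
  -- upgrade to vector-valued a.e. equality via a countable dense set
  obtain ⟨D, hDc, hDd⟩ := TopologicalSpace.exists_countable_dense GX
  have hae : ∀ᵐ ω ∂P, ∀ g ∈ D,
      ⟪g, (P[(fun ω' => ctrKer P kX X (X ω'))|MeasurableSpace.comap Z inferInstance]) ω⟫
        = ⟪g, crossCov P kX X kZ Z (dag (ctrKer P kZ Z (Z ω)))⟫ :=
    (ae_ball_iff hDc).mpr fun g _ => key g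
  filter_upwards [hae] with ω hω
  refine ext_inner_left ℝ fun w => ?_
  have hfuns : (fun g : GX => ⟪g, (P[(fun ω' => ctrKer P kX X (X ω'))|MeasurableSpace.comap Z inferInstance]) ω⟫)
      = fun g : GX => ⟪g, crossCov P kX X kZ Z (dag (ctrKer P kZ Z (Z ω)))⟫ :=
    Continuous.ext_on hDd (continuous_id.inner continuous_const)
      (continuous_id.inner continuous_const) hω
  exact congrFun hfuns w

theorem statement2
    (P : Measure Ω) [IsProbabilityMeasure P]
    {HX HY HZ GX GY GZ : Type*}
    [NormedAddCommGroup HX] [InnerProductSpace ℝ HX] [CompleteSpace HX]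
    [SecondCountableTopology HX] [MeasurableSpace HX] [BorelSpace HX]
    [NormedAddCommGroup HY] [InnerProductSpace ℝ HY] [CompleteSpace HY]
    [SecondCountableTopology HY] [MeasurableSpace HY] [BorelSpace HY]
    [NormedAddCommGroup HZ] [InnerProductSpace ℝ HZ] [CompleteSpace HZ]
    [SecondCountableTopology HZ] [MeasurableSpace HZ] [BorelSpace HZ]
    [NormedAddCommGroup GX] [InnerProductSpace ℝ GX] [CompleteSpace GX]
    [SecondCountableTopology GX] [MeasurableSpace GX] [BorelSpace GX]
    [NormedAddCommGroup GY] [InnerProductSpace ℝ GY] [CompleteSpace GY]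
    [SecondCountableTopology GY] [MeasurableSpace GY] [BorelSpace GY]
    [NormedAddCommGroup GZ] [InnerProductSpace ℝ GZ] [CompleteSpace GZ]
    [SecondCountableTopology GZ] [MeasurableSpace GZ] [BorelSpace GZ]
    (X : Ω → HX) (Y : Ω → HY) (Z : Ω → HZ)
    (hX : Measurable X) (hY : Measurable Y) (hZ : Measurable Z)
    (kX : HX → GX) (kY : HY → GY) (kZ : HZ → GZ)
    (hkX : Measurable kX) (hkY : Measurable kY) (hkZ : Measurable kZ)
    (hdX : (Submodule.span ℝ (Set.range kX)).topologicalClosure = ⊤)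
    (hdY : (Submodule.span ℝ (Set.range kY)).topologicalClosure = ⊤)
    (hdZ : (Submodule.span ℝ (Set.range kZ)).topologicalClosure = ⊤)
    (hmX : Integrable (fun ω => ⟪kX (X ω), kX (X ω)⟫) P)
    (hmY : Integrable (fun ω => ⟪kY (Y ω), kY (Y ω)⟫) P)
    (hmZ : Integrable (fun ω => ⟪kZ (Z ω), kZ (Z ω)⟫) P)
    (hCEX : ∀ g : GX, ∃ h : GZ,
      (fun ω => ⟪kZ (Z ω), h⟫) =ᵐ[P]
        P[(fun ω => ⟪kX (X ω), g⟫)|MeasurableSpace.comap Z inferInstance])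
    (hCEY : ∀ g : GY, ∃ h : GZ,
      (fun ω => ⟪kZ (Z ω), h⟫) =ᵐ[P]
        P[(fun ω => ⟪kY (Y ω), g⟫)|MeasurableSpace.comap Z inferInstance])
    (dag : GZ →ₗ[ℝ] GZ)
    (hdag : IsMoorePenroseInv (crossCov P kZ Z kZ Z) dag) :
    -- E[κ̃_X(·,X) | Z] = B_{X|Z} κ̃_Z(·,Z) a.s., B_{X|Z} = Σ_XZ Σ_ZZ^†
    (P[(fun ω => ctrKer P kX X (X ω))|MeasurableSpace.comap Z inferInstance]
      =ᵐ[P] fun ω => crossCov P kX X kZ Z (dag (ctrKer P kZ Z (Z ω)))) ∧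
    (P[(fun ω => ctrKer P kY Y (Y ω))|MeasurableSpace.comap Z inferInstance]
      =ᵐ[P] fun ω => crossCov P kY Y kZ Z (dag (ctrKer P kZ Z (Z ω)))) := by
  exact ⟨main_aux P X Z hX hZ kX kZ hkX hkZ hmX hmZ hCEX dag hdag,
    main_aux P Y Z hY hZ kY kZ hkY hkZ hmY hmZ hCEY dag hdag⟩
end
end
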